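/- Let B ∈ ℝ^{M×N} have full row-rank (i.e., BBᵀ is invertible), and let B⁺ = Bᵀ(BBᵀ)⁻¹ denote its pseudo-inverse. Define d : ℝ^N → ℝ by d(u) = inf_{w ∈ null B} ‖u − w‖₁, the ℓ₁ distance from u to the null space of B. Then for every x ∈ ℝ^N, S_B(x) = inf_{v ∈ ℝ^M} ( d(B⁺ v) + (1/2)‖B x − v‖₂² ). -/

import Mathlib

open Matrix

/-- The ℓ₁ norm on `ℝ^N`. -/
noncomputable def norm1 {N : ℕ} (v : Fin N → ℝ) : ℝ := ∑ n, |v n|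

/-- The squared Euclidean (ℓ₂) norm on `ℝ^M`. -/
def norm2sq {M : ℕ} (u : Fin M → ℝ) : ℝ := ∑ m, (u m) ^ 2

/-- The generalized Huber function
`S_B(x) = inf_v ( ‖v‖₁ + (1/2) ‖B(x - v)‖₂² )`. -/
noncomputable def genHuber {M N : ℕ} (B : Matrix (Fin M) (Fin N) ℝ) (x : Fin N → ℝ) : ℝ :=
  ⨅ v : Fin N → ℝ, (norm1 v + (1 / 2) * norm2sq (B.mulVec (x - v)))

/-- The generalized MC (GMC) penalty `ψ_B(x) = ‖x‖₁ - S_B(x)`. -/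
noncomputable def gmcPenalty {M N : ℕ} (B : Matrix (Fin M) (Fin N) ℝ) (x : Fin N → ℝ) : ℝ :=
  norm1 x - genHuber B x

/-- The ℓ₁ distance from `u` to the null space of `B`. -/
noncomputable def distL1ToNull {M N : ℕ} (B : Matrix (Fin M) (Fin N) ℝ) (u : Fin N → ℝ) : ℝ :=
  ⨅ w : {w : Fin N → ℝ // B.mulVec w = 0}, norm1 (u - w.val)

lemma norm1_nonneg {N : ℕ} (v : Fin N → ℝ) : 0 ≤ norm1 v :=
  Finset.sum_nonneg fun _ _ => abs_nonneg _

lemma norm2sq_nonneg {M : ℕ} (u : Fin M → ℝ) : 0 ≤ norm2sq u :=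
  Finset.sum_nonneg fun _ _ => sq_nonneg _

lemma distL1ToNull_nonneg {M N : ℕ} (B : Matrix (Fin M) (Fin N) ℝ) (u : Fin N → ℝ) :
    0 ≤ distL1ToNull B u :=
  Real.iInf_nonneg fun _ => norm1_nonneg _

/-- For full row-rank `B` with pseudo-inverse `B⁺ = Bᵀ(BBᵀ)⁻¹`, the generalized Huber
function is the Moreau envelope of `d ∘ B⁺` evaluated at `Bx`, where `d` is the ℓ₁
distance to the null space of `B`. -/
theorem genHuber_eq_moreau_of_fullRowRank {M N : ℕ} (B : Matrix (Fin M) (Fin N) ℝ)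
    (hB : IsUnit (B * Bᵀ).det) (x : Fin N → ℝ) :
    genHuber B x
      = ⨅ v : Fin M → ℝ,
          (distL1ToNull B ((Bᵀ * (B * Bᵀ)⁻¹).mulVec v) + (1 / 2) * norm2sq (B.mulVec x - v)) := by
  set P := Bᵀ * (B * Bᵀ)⁻¹ with hP
  have hBP : B * P = 1 := by
    rw [hP, ← Matrix.mul_assoc, Matrix.mul_nonsing_inv _ hB]
  haveI : Nonempty {w : Fin N → ℝ // B.mulVec w = 0} := ⟨⟨0, mulVec_zero B⟩⟩
  have hBPv : ∀ u : Fin M → ℝ, B.mulVec (P.mulVec u) = u := fun u => by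
    rw [mulVec_mulVec, hBP, one_mulVec]
  have hbddL : BddBelow (Set.range fun v : Fin N → ℝ =>
      norm1 v + (1 / 2) * norm2sq (B.mulVec (x - v))) := by
    refine ⟨0, ?_⟩
    rintro _ ⟨v, rfl⟩
    have := norm1_nonneg v
    have := norm2sq_nonneg (B.mulVec (x - v))
    positivity
  have hbddR : BddBelow (Set.range fun v : Fin M → ℝ =>
      distL1ToNull B (P.mulVec v) + (1 / 2) * norm2sq (B.mulVec x - v)) := by
    refine ⟨0, ?_⟩
    rintro _ ⟨v, rfl⟩
    have := distL1ToNull_nonneg B (P.mulVec v)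
    have := norm2sq_nonneg (B.mulVec x - v)
    positivity
  have hbddD : ∀ u : Fin N → ℝ, BddBelow (Set.range fun w : {w : Fin N → ℝ // B.mulVec w = 0} =>
      norm1 (u - w.val)) := by
    intro u
    exact ⟨0, by rintro _ ⟨w, rfl⟩; exact norm1_nonneg _⟩
  apply le_antisymm
  · apply le_ciInf
    intro v
    have h1 : genHuber B x - (1 / 2) * norm2sq (B.mulVec x - v) ≤ distL1ToNull B (P.mulVec v) := by
      apply le_ciInf
      rintro ⟨w, hw⟩
      have key : B.mulVec (x - (P.mulVec v - w)) = B.mulVec x - v := by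
        rw [mulVec_sub, mulVec_sub, hw, sub_zero, hBPv]
      have h2 : genHuber B x ≤ norm1 (P.mulVec v - w) +
          (1 / 2) * norm2sq (B.mulVec (x - (P.mulVec v - w))) :=
        ciInf_le hbddL (P.mulVec v - w)
      rw [key] at h2
      simpa using sub_le_iff_le_add.mpr h2
    linarith [sub_le_iff_le_add.mp h1]
  · apply le_ciInf
    intro v
    have hw : B.mulVec (P.mulVec (B.mulVec v) - v) = 0 := by
      rw [mulVec_sub, hBPv, sub_self]
    have hdist : distL1ToNull B (P.mulVec (B.mulVec v)) ≤ norm1 v := by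
      have h := ciInf_le (hbddD (P.mulVec (B.mulVec v))) ⟨_, hw⟩
      simpa [sub_sub_cancel, distL1ToNull] using h
    have h3 : (⨅ v : Fin M → ℝ,
        (distL1ToNull B (P.mulVec v) + (1 / 2) * norm2sq (B.mulVec x - v)))
        ≤ distL1ToNull B (P.mulVec (B.mulVec v)) + (1 / 2) * norm2sq (B.mulVec x - B.mulVec v) :=
      ciInf_le hbddR (B.mulVec v)
    have key : B.mulVec (x - v) = B.mulVec x - B.mulVec v := mulVec_sub B x v
    rw [key]
    linarith
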